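/- Let B be a real Banach space, let T be a nonexpansive linear operator on B, let x ∈ B, let N ≥ 1 be a natural number, let α ≥ 1 be a real number, and let ε > 0 satisfy ε < 2‖x‖. Suppose there are integers N ≤ i_1 ≤ j_1 ≤ i_2 ≤ j_2 ≤ … ≤ i_s ≤ j_s ≤ αN such that ‖A_{j_u} x − A_{i_u} x‖ ≥ ε for each u = 1,…,s. Then s ≤ 4 (log α) ‖x‖ / ε, where log is the natural logarithm. In other words, the number of ε-fluctuations of (A_n x) between N and αN is at most ⌊4 (log α) ‖x‖ / ε⌋. -/

import Mathlib

open Finset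

/-- The ergodic averages `A n x = (1/n) ∑_{i<n} Tⁱ x`. -/
noncomputable def ergAvg {B : Type*} [NormedAddCommGroup B] [Module ℝ B]
    (T : B →ₗ[ℝ] B) (n : ℕ) (x : B) : B :=
  (n : ℝ)⁻¹ • ∑ i ∈ Finset.range n, (T ^ i) x

lemma pow_apply_norm_le' {B : Type*} [NormedAddCommGroup B] [Module ℝ B]
    (T : B →ₗ[ℝ] B) (hT : ∀ y : B, ‖T y‖ ≤ ‖y‖) (k : ℕ) (y : B) :
    ‖(T ^ k) y‖ ≤ ‖y‖ := by
  induction k with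
  | zero => simp
  | succ n ih =>
    rw [pow_succ']
    calc ‖(T * T ^ n) y‖ = ‖T ((T ^ n) y)‖ := rfl
      _ ≤ ‖(T ^ n) y‖ := hT _
      _ ≤ ‖y‖ := ih

lemma sum_Ico_norm_le' {B : Type*} [NormedAddCommGroup B] [Module ℝ B]
    (T : B →ₗ[ℝ] B) (hT : ∀ y : B, ‖T y‖ ≤ ‖y‖) (x : B) (a b : ℕ) :
    ‖∑ k ∈ Finset.Ico a b, (T ^ k) x‖ ≤ ((b - a : ℕ) : ℝ) * ‖x‖ := by
  calc ‖∑ k ∈ Finset.Ico a b, (T ^ k) x‖ ≤ ∑ k ∈ Finset.Ico a b, ‖(T ^ k) x‖ :=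
        norm_sum_le _ _
    _ ≤ ∑ k ∈ Finset.Ico a b, ‖x‖ :=
        Finset.sum_le_sum fun k _ => pow_apply_norm_le' T hT k x
    _ = ((b - a : ℕ) : ℝ) * ‖x‖ := by
        rw [Finset.sum_const, Nat.card_Ico, nsmul_eq_mul]

lemma ergAvg_diff_le' {B : Type*} [NormedAddCommGroup B] [NormedSpace ℝ B]
    (T : B →ₗ[ℝ] B) (hT : ∀ y : B, ‖T y‖ ≤ ‖y‖) (x : B) (m n : ℕ)
    (hm : 1 ≤ m) (hmn : m ≤ n) :
    ‖ergAvg T n x - ergAvg T m x‖ ≤ 2 * ‖x‖ * ((n : ℝ) - m) / n := by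
  have hn : 1 ≤ n := le_trans hm hmn
  have hm0 : (0:ℝ) < m := by exact_mod_cast hm
  have hn0 : (0:ℝ) < n := by exact_mod_cast hn
  have hsplit : ∑ k ∈ Finset.range n, (T ^ k) x
      = ∑ k ∈ Finset.range m, (T ^ k) x + ∑ k ∈ Finset.Ico m n, (T ^ k) x := by
    rw [Finset.range_eq_Ico, Finset.range_eq_Ico, Finset.sum_Ico_consecutive _ (Nat.zero_le m) hmn]
  have key : ergAvg T n x - ergAvg T m x
      = ((n:ℝ)⁻¹ - (m:ℝ)⁻¹) • (∑ k ∈ Finset.range m, (T ^ k) x)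
        + (n:ℝ)⁻¹ • (∑ k ∈ Finset.Ico m n, (T ^ k) x) := by
    rw [ergAvg, ergAvg, hsplit, smul_add, sub_smul]
    abel
  have hS1 : ‖∑ k ∈ Finset.range m, (T ^ k) x‖ ≤ (m : ℝ) * ‖x‖ := by
    have := sum_Ico_norm_le' T hT x 0 m
    rw [← Finset.range_eq_Ico, Nat.sub_zero] at this
    exact this
  have hS2 : ‖∑ k ∈ Finset.Ico m n, (T ^ k) x‖ ≤ ((n : ℝ) - m) * ‖x‖ := by
    have := sum_Ico_norm_le' T hT x m n
    rwa [Nat.cast_sub hmn] at this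
  have habs : |(n:ℝ)⁻¹ - (m:ℝ)⁻¹| = (m:ℝ)⁻¹ - (n:ℝ)⁻¹ := by
    rw [abs_sub_comm, abs_of_nonneg]
    have : (n:ℝ)⁻¹ ≤ (m:ℝ)⁻¹ := by
      apply inv_anti₀ hm0
      exact_mod_cast hmn
    linarith
  have h1 : ‖((n:ℝ)⁻¹ - (m:ℝ)⁻¹) • (∑ k ∈ Finset.range m, (T ^ k) x)‖
      ≤ ((m:ℝ)⁻¹ - (n:ℝ)⁻¹) * ((m : ℝ) * ‖x‖) := by
    rw [norm_smul, Real.norm_eq_abs, habs]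
    have hnm : (n:ℝ)⁻¹ ≤ (m:ℝ)⁻¹ := by
      apply inv_anti₀ hm0
      exact_mod_cast hmn
    exact mul_le_mul_of_nonneg_left hS1 (by linarith)
  have h2 : ‖(n:ℝ)⁻¹ • (∑ k ∈ Finset.Ico m n, (T ^ k) x)‖
      ≤ (n:ℝ)⁻¹ * (((n : ℝ) - m) * ‖x‖) := by
    rw [norm_smul, Real.norm_eq_abs, abs_of_nonneg (by positivity)]
    exact mul_le_mul_of_nonneg_left hS2 (by positivity)
  have heq : ((m:ℝ)⁻¹ - (n:ℝ)⁻¹) * ((m : ℝ) * ‖x‖) + (n:ℝ)⁻¹ * (((n : ℝ) - m) * ‖x‖)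
      = 2 * ‖x‖ * ((n : ℝ) - m) / n := by
    field_simp
    ring
  calc ‖ergAvg T n x - ergAvg T m x‖
      ≤ ‖((n:ℝ)⁻¹ - (m:ℝ)⁻¹) • (∑ k ∈ Finset.range m, (T ^ k) x)‖
        + ‖(n:ℝ)⁻¹ • (∑ k ∈ Finset.Ico m n, (T ^ k) x)‖ := by
        rw [key]; exact norm_add_le _ _
    _ ≤ ((m:ℝ)⁻¹ - (n:ℝ)⁻¹) * ((m : ℝ) * ‖x‖) + (n:ℝ)⁻¹ * (((n : ℝ) - m) * ‖x‖) :=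
        add_le_add h1 h2
    _ = 2 * ‖x‖ * ((n : ℝ) - m) / n := heq

/-- A small interval cannot contain many `ε`-fluctuations: if
`N ≤ i₁ ≤ j₁ ≤ … ≤ i_s ≤ j_s ≤ αN` with `‖A_{j u} x − A_{i u} x‖ ≥ ε` for each `u = 1, …, s`,
and `0 < ε < 2‖x‖`, `α ≥ 1`, then `s ≤ 4 (log α) ‖x‖ / ε`. -/
theorem stmt12 {B : Type*} [NormedAddCommGroup B] [NormedSpace ℝ B]
    (T : B →ₗ[ℝ] B) (hT : ∀ y : B, ‖T y‖ ≤ ‖y‖) (x : B)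
    (N : ℕ) (hN : 1 ≤ N) (α : ℝ) (hα : 1 ≤ α) (ε : ℝ) (hε : 0 < ε) (hε2 : ε < 2 * ‖x‖)
    (s : ℕ) (i j : ℕ → ℕ)
    (hord : ∀ u, 1 ≤ u → u ≤ s → N ≤ i u ∧ i u ≤ j u ∧ (j u : ℝ) ≤ α * N)
    (hchain : ∀ u, 1 ≤ u → u < s → j u ≤ i (u + 1))
    (hfluc : ∀ u, 1 ≤ u → u ≤ s → ε ≤ ‖ergAvg T (j u) x - ergAvg T (i u) x‖) :
    (s : ℝ) ≤ 4 * Real.log α * ‖x‖ / ε := by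
  have hX : 0 < ‖x‖ := by nlinarith
  have hlogα : 0 ≤ Real.log α := Real.log_nonneg hα
  rcases Nat.eq_zero_or_pos s with hs | hs
  · rw [hs]
    push_cast
    apply div_nonneg _ hε.le
    have : (0:ℝ) ≤ 4 * Real.log α := by linarith
    nlinarith
  set c : ℝ := 1 - ε / (2 * ‖x‖) with hc
  have hd1 : ε / (2 * ‖x‖) < 1 := by
    rw [div_lt_one (by positivity)]; exact hε2
  have hd0 : 0 < ε / (2 * ‖x‖) := by positivity
  have hc0 : 0 < c := by rw [hc]; linarith
  have hc1 : c < 1 := by rw [hc]; linarith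
  have hdcancel : ε / (2 * ‖x‖) * (2 * ‖x‖) = ε := div_mul_cancel₀ _ (by positivity)
  have hstep : ∀ u, 1 ≤ u → u ≤ s → (i u : ℝ) ≤ c * j u := by
    intro u hu1 hus
    obtain ⟨hNi, hij, hjα⟩ := hord u hu1 hus
    have hj1 : 1 ≤ j u := le_trans hN (le_trans hNi hij)
    have hj0 : (0:ℝ) < j u := by exact_mod_cast hj1
    have hd := ergAvg_diff_le' T hT x (i u) (j u) (le_trans hN hNi) hij
    have hεd : ε ≤ 2 * ‖x‖ * ((j u : ℝ) - i u) / j u := le_trans (hfluc u hu1 hus) hd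
    have h2 : ε * j u ≤ 2 * ‖x‖ * ((j u : ℝ) - i u) := by
      rwa [le_div_iff₀ hj0] at hεd
    rw [hc]
    nlinarith [hdcancel, mul_pos hX hj0]
  have hchain' : ∀ u, 1 ≤ u → u ≤ s → (N:ℝ) ≤ c ^ u * j u := by
    intro u
    induction u with
    | zero => intro h; omega
    | succ v ih =>
      intro _ hus
      rcases Nat.eq_zero_or_pos v with hv | hv
      · subst hv
        have h := (hord 1 le_rfl hus).1
        calc (N:ℝ) ≤ i 1 := by exact_mod_cast h
          _ ≤ c * j 1 := hstep 1 le_rfl hus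
          _ = c ^ 1 * j 1 := by rw [pow_one]
      · have hvs : v ≤ s := Nat.le_of_succ_le hus
        have hIH := ih hv hvs
        have hji : j v ≤ i (v+1) := hchain v hv (Nat.lt_of_succ_le hus)
        calc (N:ℝ) ≤ c ^ v * j v := hIH
          _ ≤ c ^ v * i (v+1) := by gcongr
          _ ≤ c ^ v * (c * j (v+1)) :=
              mul_le_mul_of_nonneg_left (hstep (v+1) (by omega) hus) (by positivity)
          _ = c ^ (v+1) * j (v+1) := by ring
  have hN0 : (0:ℝ) < N := by exact_mod_cast hN
  obtain ⟨_, _, hjα⟩ := hord s hs le_rfl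
  have hfin : (N:ℝ) ≤ c ^ s * (α * N) := by
    calc (N:ℝ) ≤ c ^ s * j s := hchain' s hs le_rfl
      _ ≤ c ^ s * (α * N) := by gcongr
  have h1 : (1:ℝ) ≤ c ^ s * α := by
    have := hfin
    nlinarith [pow_pos hc0 s]
  have hlog : (0:ℝ) ≤ (s:ℝ) * Real.log c + Real.log α := by
    have hpos : (0:ℝ) < c ^ s * α := by positivity
    have := Real.log_le_log (by norm_num) h1
    rwa [Real.log_one, Real.log_mul (by positivity) (by positivity),
      Real.log_pow] at this
  have hlogc : Real.log c ≤ c - 1 := Real.log_le_sub_one_of_pos hc0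
  have hmul : (s:ℝ) * Real.log c ≤ (s:ℝ) * (c - 1) :=
    mul_le_mul_of_nonneg_left hlogc (by positivity)
  have hkey : (s:ℝ) * (ε / (2 * ‖x‖)) ≤ Real.log α := by
    have : c - 1 = -(ε / (2 * ‖x‖)) := by rw [hc]; ring
    rw [this] at hmul
    nlinarith
  rw [le_div_iff₀ hε]
  have h5 : (s:ℝ) * (ε / (2 * ‖x‖)) * (2 * ‖x‖) ≤ Real.log α * (2 * ‖x‖) :=
    mul_le_mul_of_nonneg_right hkey (by positivity)
  rw [mul_assoc, hdcancel] at h5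
  nlinarith [mul_nonneg hlogα hX.le]
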